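/- For a one-sided test of θ=θ₀ vs θ=θ₁ with Normal data of known variance σ², define the frequentist sample size n_F = (z_α+z_β)²(σ/δ)² where δ=θ₁−θ₀>0, z_α=Φ⁻¹(1−α), z_β=Φ⁻¹(1−β). Define the Bayesian goal function G_B(n) = Kπ·Φ(σlog(Kπ/(1−π))/(√n δ) + δ√n/(2σ)) + (1−π)·Φ(δ√n/(2σ) − σlog(Kπ/(1−π))/(√n δ)). Then G_B(n_F) = Kπ·Φ(log(Kπ/(1−π))/(z_α+z_β) + (z_α+z_β)/2) + (1−π)·Φ((z_α+z_β)/2 − log(Kπ/(1−π))/(z_α+z_β)), which depends only on (α,β,π,K) and not on δ or σ. -/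

import Mathlib

/-- Inoue et al.: the Bayesian goal function evaluated at the frequentist
sample size depends only on (α, β, π, K), not on δ or σ. -/
theorem stmt0 (Φ : ℝ → ℝ) (α β πH K σ δ zα zβ : ℝ)
    (hπ : πH ∈ Set.Ioo (0:ℝ) 1) (hK : 0 < K) (hσ : 0 < σ) (hδ : 0 < δ)
    (hz : 0 < zα + zβ) (hzα : Φ zα = 1 - α) (hzβ : Φ zβ = 1 - β)
    (G : ℝ → ℝ)
    (hG : ∀ n : ℝ, G n =
      K * πH * Φ (σ * Real.log (K * πH / (1 - πH)) / (Real.sqrt n * δ)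
        + δ * Real.sqrt n / (2 * σ))
      + (1 - πH) * Φ (δ * Real.sqrt n / (2 * σ)
        - σ * Real.log (K * πH / (1 - πH)) / (Real.sqrt n * δ)))
    (nF : ℝ) (hnF : nF = (zα + zβ)^2 * (σ / δ)^2) :
    G nF = K * πH * Φ (Real.log (K * πH / (1 - πH)) / (zα + zβ) + (zα + zβ) / 2)
      + (1 - πH) * Φ ((zα + zβ) / 2 - Real.log (K * πH / (1 - πH)) / (zα + zβ)) := by
  have hs : Real.sqrt nF = (zα + zβ) * (σ / δ) := by
    rw [hnF, ← mul_pow, Real.sqrt_sq (by positivity)]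
  rw [hG, hs]
  have h1 : σ * Real.log (K * πH / (1 - πH)) / ((zα + zβ) * (σ / δ) * δ)
      = Real.log (K * πH / (1 - πH)) / (zα + zβ) := by
    field_simp
  have h2 : δ * ((zα + zβ) * (σ / δ)) / (2 * σ) = (zα + zβ) / 2 := by
    field_simp
  rw [h1, h2]
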